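/- Let (Ω, 𝔉, P) be a probability space with a filtration 𝔉_1 ⊆ 𝔉_2 ⊆ ⋯, and let (X_1, Y_1), …, (X_T, Y_T) be pairs of real random variables such that each X_t and Y_t is 𝔉_{t+1}-measurable, and assume for some constant B > 0 that almost surely |X_t| ≤ B and 0 ≤ Y_t ≤ B, that E[X_t | 𝔉_t] ≥ E[Y_t | 𝔉_t], and that B · E[X_t | 𝔉_t] ≥ E[X_t² | 𝔉_t] for every t. Then for every δ ∈ (0,1): (i) with probability at least 1 − δ, (1/2) · Σ_{t=1}^T E[X_t | 𝔉_t] ≤ Σ_{t=1}^T (X_t − Y_t/4) + 9B · log(1/δ); and (ii) with probability at least 1 − δ, (1/2) · Σ_{t=1}^T X_t ≤ Σ_{t=1}^T (X_t − Y_t/4) + 9B · log(1/δ). -/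

import Mathlib

open MeasureTheory Finset

section AEBdd

variable {Ω : Type*} {m0 : MeasurableSpace Ω} {P : Measure Ω}

/-- almost-everywhere bounded -/
private def AEBdd (P : Measure Ω) (f : Ω → ℝ) : Prop := ∃ C : ℝ, ∀ᵐ ω ∂P, |f ω| ≤ C

private lemma AEBdd.const (c : ℝ) : AEBdd P (fun _ => c) := ⟨|c|, Filter.Eventually.of_forall fun _ => le_rfl⟩

private lemma AEBdd.add {f g : Ω → ℝ} (hf : AEBdd P f) (hg : AEBdd P g) :
    AEBdd P (fun ω => f ω + g ω) := by
  obtain ⟨C, hC⟩ := hf; obtain ⟨D, hD⟩ := hg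
  exact ⟨C + D, by filter_upwards [hC, hD] with ω h1 h2 using (abs_add_le _ _).trans (add_le_add h1 h2)⟩

private lemma AEBdd.neg {f : Ω → ℝ} (hf : AEBdd P f) : AEBdd P (fun ω => -f ω) := by
  obtain ⟨C, hC⟩ := hf
  exact ⟨C, by filter_upwards [hC] with ω h1; simpa using h1⟩

private lemma AEBdd.sub {f g : Ω → ℝ} (hf : AEBdd P f) (hg : AEBdd P g) :
    AEBdd P (fun ω => f ω - g ω) := by
  simpa [sub_eq_add_neg] using hf.add hg.neg

private lemma AEBdd.mul {f g : Ω → ℝ} (hf : AEBdd P f) (hg : AEBdd P g) :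
    AEBdd P (fun ω => f ω * g ω) := by
  obtain ⟨C, hC⟩ := hf; obtain ⟨D, hD⟩ := hg
  refine ⟨|C| * |D|, ?_⟩
  filter_upwards [hC, hD] with ω h1 h2
  rw [abs_mul]
  exact mul_le_mul (h1.trans (le_abs_self C)) (h2.trans (le_abs_self D)) (abs_nonneg _) (abs_nonneg _)

private lemma AEBdd.const_mul {f : Ω → ℝ} (hf : AEBdd P f) (c : ℝ) :
    AEBdd P (fun ω => c * f ω) := (AEBdd.const c).mul hf

private lemma AEBdd.sq {f : Ω → ℝ} (hf : AEBdd P f) : AEBdd P (fun ω => f ω ^ 2) := by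
  have := hf.mul hf
  simpa [pow_two] using this

private lemma AEBdd.exp {f : Ω → ℝ} (hf : AEBdd P f) : AEBdd P (fun ω => Real.exp (f ω)) := by
  obtain ⟨C, hC⟩ := hf
  refine ⟨Real.exp C, ?_⟩
  filter_upwards [hC] with ω h1
  rw [abs_of_pos (Real.exp_pos _)]
  exact Real.exp_le_exp.2 ((le_abs_self _).trans h1)

private lemma AEBdd.finsetSum {ι : Type*} {s : Finset ι} {f : ι → Ω → ℝ}
    (h : ∀ i ∈ s, AEBdd P (f i)) : AEBdd P (fun ω => ∑ i ∈ s, f i ω) := by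
  classical
  induction s using Finset.cons_induction with
  | empty => simpa using AEBdd.const 0
  | cons a s ha ih =>
      have h1 : AEBdd P (f a) := h a (Finset.mem_cons_self _ _)
      have h2 := ih fun i hi => h i (Finset.mem_cons_of_mem hi)
      have := h1.add h2
      convert this using 2 with ω
      rw [Finset.sum_cons]

private lemma AEBdd.integrable [IsFiniteMeasure P] {f : Ω → ℝ}
    (hm : AEStronglyMeasurable f P) (hf : AEBdd P f) : Integrable f P := by
  obtain ⟨C, hC⟩ := hf
  exact (integrable_const C).mono' hm
    (by filter_upwards [hC] with ω h1; simpa [Real.norm_eq_abs] using h1)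

private lemma AEBdd.condexp {m : MeasurableSpace Ω} {f : Ω → ℝ} (hf : AEBdd P f) :
    AEBdd P (P[f|m]) := by
  obtain ⟨C, hC⟩ := hf
  have hC' : ∀ᵐ ω ∂P, |f ω| ≤ (⟨max C 0, le_max_right _ _⟩ : NNReal) := by
    filter_upwards [hC] with ω h1
    exact h1.trans (le_max_left _ _)
  exact ⟨_, ae_bdd_condExp_of_ae_bdd hC'⟩

end AEBdd

private lemma exp_quad {x : ℝ} (hx : x ≤ 1) : Real.exp x ≤ 1 + x + x ^ 2 := by
  rcases le_or_gt (-1) x with h | h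
  · have hb := Real.exp_bound (abs_le.2 ⟨h, hx⟩) (n := 2) (by norm_num)
    have h2 : (∑ m ∈ Finset.range 2, x ^ m / m.factorial) = 1 + x := by
      simp [Finset.sum_range_succ]
    rw [h2] at hb
    have h3 := (abs_sub_le_iff.1 hb).1
    have h4 : |x| ^ 2 = x ^ 2 := sq_abs x
    rw [h4] at h3
    norm_num at h3
    nlinarith [sq_nonneg x]
  · have h1 : Real.exp x < Real.exp 0 := Real.exp_lt_exp.2 (by linarith)
    rw [Real.exp_zero] at h1
    nlinarith

private lemma key {Ω : Type*} {m0 : MeasurableSpace Ω} (P : Measure Ω) [IsProbabilityMeasure P]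
    (ℱ : Filtration ℕ m0) (X Y : ℕ → Ω → ℝ) (B : ℝ) (hB : 0 < B)
    (α β : ℝ) (hα : 0 ≤ α) (hβ : 0 ≤ β) (hαβ : (α + β) * B ≤ 1) :
    ∀ T : ℕ,
      (∀ t ∈ Icc 1 T, StronglyMeasurable[ℱ (t + 1)] (X t)) →
      (∀ t ∈ Icc 1 T, StronglyMeasurable[ℱ (t + 1)] (Y t)) →
      (∀ t ∈ Icc 1 T, ∀ᵐ ω ∂P, |X t ω| ≤ B) →
      (∀ t ∈ Icc 1 T, ∀ᵐ ω ∂P, Y t ω ∈ Set.Icc (0 : ℝ) B) →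
      (∀ t ∈ Icc 1 T, ∀ᵐ ω ∂P,
        (P[fun ω' => (X t ω') ^ 2 | ℱ t]) ω ≤ B * (P[X t | ℱ t]) ω) →
      ∫ ω, Real.exp (∑ t ∈ Icc 1 T, (β * Y t ω - α * X t ω +
        ((α - 2 * α ^ 2 * B) * (P[X t | ℱ t]) ω
          - (β + 2 * β ^ 2 * B) * (P[Y t | ℱ t]) ω))) ∂P ≤ 1 := by
  intro T
  induction T with
  | zero =>
      intro _ _ _ _ _
      have he : Finset.Icc 1 0 = (∅ : Finset ℕ) := by decide
      simp [he]
  | succ n ih =>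
      intro hXmeas hYmeas hXbdd hYbdd hX2
      have hmem : (n + 1) ∈ Icc 1 (n + 1) := by simp
      have hsub : ∀ t ∈ Icc 1 n, t ∈ Icc 1 (n + 1) := fun t ht => by
        simp only [mem_Icc] at ht ⊢; omega
      have hm : ℱ (n + 1) ≤ m0 := ℱ.le (n + 1)
      -- abbreviations
      set EX : Ω → ℝ := P[X (n + 1) | ℱ (n + 1)] with hEX_def
      set EY : Ω → ℝ := P[Y (n + 1) | ℱ (n + 1)] with hEY_def
      set u : Ω → ℝ := fun ω => β * Y (n + 1) ω - α * X (n + 1) ω with hu_def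
      set g : Ω → ℝ := fun ω =>
        (α - 2 * α ^ 2 * B) * EX ω - (β + 2 * β ^ 2 * B) * EY ω with hg_def
      set S : Ω → ℝ := fun ω => ∑ t ∈ Icc 1 n, (β * Y t ω - α * X t ω +
        ((α - 2 * α ^ 2 * B) * (P[X t | ℱ t]) ω
          - (β + 2 * β ^ 2 * B) * (P[Y t | ℱ t]) ω)) with hS_def
      -- a.e. bounds
      have hXb := hXbdd (n + 1) hmem
      have hYb := hYbdd (n + 1) hmem
      have hXB : AEBdd P (X (n + 1)) := ⟨B, hXb⟩
      have hYB : AEBdd P (Y (n + 1)) := ⟨B, by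
        filter_upwards [hYb] with ω h
        rw [abs_le]; exact ⟨by linarith [h.1, hB.le], h.2⟩⟩
      have htermB : ∀ t ∈ Icc 1 (n + 1), AEBdd P (fun ω => β * Y t ω - α * X t ω +
          ((α - 2 * α ^ 2 * B) * (P[X t | ℱ t]) ω
            - (β + 2 * β ^ 2 * B) * (P[Y t | ℱ t]) ω)) := by
        intro t ht
        have hXt : AEBdd P (X t) := ⟨B, hXbdd t ht⟩
        have hYt : AEBdd P (Y t) := ⟨B, by
          filter_upwards [hYbdd t ht] with ω h
          rw [abs_le]; exact ⟨by linarith [h.1, hB.le], h.2⟩⟩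
        exact ((hYt.const_mul β).sub (hXt.const_mul α)).add
          ((hXt.condexp.const_mul _).sub (hYt.condexp.const_mul _))
      have hSB : AEBdd P S := AEBdd.finsetSum fun t ht => htermB t (hsub t ht)
      have hgB : AEBdd P g := (hXB.condexp.const_mul _).sub (hYB.condexp.const_mul _)
      have huB : AEBdd P u := (hYB.const_mul β).sub (hXB.const_mul α)
      -- measurability
      have hXm : StronglyMeasurable[m0] (X (n + 1)) := (hXmeas _ hmem).mono (ℱ.le _)
      have hYm : StronglyMeasurable[m0] (Y (n + 1)) := (hYmeas _ hmem).mono (ℱ.le _)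
      have hum : StronglyMeasurable[m0] u :=
        ((hYm.const_mul β).sub (hXm.const_mul α))
      have hgm : StronglyMeasurable[ℱ (n + 1)] g :=
        ((stronglyMeasurable_condExp.const_mul _).sub (stronglyMeasurable_condExp.const_mul _))
      have hSm : StronglyMeasurable[ℱ (n + 1)] S := by
        refine Finset.stronglyMeasurable_fun_sum _ fun t ht => ?_
        have h1 : ℱ (t + 1) ≤ ℱ (n + 1) := ℱ.mono (by simp only [mem_Icc] at ht; omega)
        have h2 : ℱ t ≤ ℱ (n + 1) := ℱ.mono (by simp only [mem_Icc] at ht; omega)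
        exact ((((hYmeas t (hsub t ht)).mono h1).const_mul β).sub
            (((hXmeas t (hsub t ht)).mono h1).const_mul α)).add
          (((stronglyMeasurable_condExp.mono h2).const_mul _).sub
            ((stronglyMeasurable_condExp.mono h2).const_mul _))
      have hSgm : StronglyMeasurable[ℱ (n + 1)] (fun ω => Real.exp (S ω + g ω)) :=
        Real.continuous_exp.comp_stronglyMeasurable (hSm.add hgm)
      -- integrability
      have hexpu_int : Integrable (fun ω => Real.exp (u ω)) P :=
        huB.exp.integrable (Real.continuous_exp.comp_stronglyMeasurable hum).aestronglyMeasurable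
      have hu_int : Integrable u P := huB.integrable hum.aestronglyMeasurable
      have hY2_int : Integrable (fun ω => Y (n + 1) ω ^ 2) P :=
        hYB.sq.integrable (hYm.pow 2).aestronglyMeasurable
      have hX2_int : Integrable (fun ω => X (n + 1) ω ^ 2) P :=
        hXB.sq.integrable (hXm.pow 2).aestronglyMeasurable
      have hexpS_int : Integrable (fun ω => Real.exp (S ω)) P :=
        hSB.exp.integrable
          (Real.continuous_exp.comp_stronglyMeasurable (hSm.mono hm)).aestronglyMeasurable
      have hprod_int : Integrable (fun ω => Real.exp (S ω + g ω) * Real.exp (u ω)) P :=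
        ((hSB.add hgB).exp.mul huB.exp).integrable
          (((Real.continuous_exp.comp_stronglyMeasurable ((hSm.add hgm).mono hm)).mul
            (Real.continuous_exp.comp_stronglyMeasurable hum)).aestronglyMeasurable)
      -- the quadratic majorant r
      have hr_int : Integrable ((fun _ => (1:ℝ)) + (β • Y (n + 1) - α • X (n + 1)) +
          ((2 * β ^ 2) • (fun ω => Y (n + 1) ω ^ 2) + (2 * α ^ 2) • (fun ω => X (n + 1) ω ^ 2))) P := by
        refine Integrable.add (Integrable.add (integrable_const 1) ?_) ?_
        · exact ((hYB.integrable hYm.aestronglyMeasurable).smul β).sub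
            ((hXB.integrable hXm.aestronglyMeasurable).smul α)
        · exact (hY2_int.smul _).add (hX2_int.smul _)
      -- pointwise bound exp u ≤ r, a.e.
      have hquad : (fun ω => Real.exp (u ω)) ≤ᵐ[P] ((fun _ => (1:ℝ)) + (β • Y (n + 1) - α • X (n + 1)) +
          ((2 * β ^ 2) • (fun ω => Y (n + 1) ω ^ 2) + (2 * α ^ 2) • (fun ω => X (n + 1) ω ^ 2))) := by
        filter_upwards [hXb, hYb] with ω h1 h2
        have hu1 : u ω ≤ 1 := by
          have e1 : β * Y (n + 1) ω ≤ β * B := mul_le_mul_of_nonneg_left h2.2 hβ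
          have e2 : -(α * X (n + 1) ω) ≤ α * B := by
            have := (abs_le.1 h1).1; nlinarith
          have : u ω ≤ (α + β) * B := by
            simp only [hu_def]; nlinarith
          linarith
        have hq := exp_quad hu1
        have hsq : u ω ^ 2 ≤ 2 * β ^ 2 * Y (n + 1) ω ^ 2 + 2 * α ^ 2 * X (n + 1) ω ^ 2 := by
          simp only [hu_def]
          nlinarith [sq_nonneg (β * Y (n + 1) ω + α * X (n + 1) ω)]
        simp only [Pi.add_apply, Pi.sub_apply, Pi.smul_apply, smul_eq_mul, hu_def] at *
        nlinarith
      -- conditional expectation of r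
      have hlin : P[((fun _ => (1:ℝ)) + (β • Y (n + 1) - α • X (n + 1)) +
            ((2 * β ^ 2) • (fun ω => Y (n + 1) ω ^ 2) + (2 * α ^ 2) • (fun ω => X (n + 1) ω ^ 2)))
            | ℱ (n + 1)] =ᵐ[P]
          fun ω => 1 + (β * EY ω - α * EX ω) +
            (2 * β ^ 2 * (P[fun ω' => Y (n + 1) ω' ^ 2 | ℱ (n + 1)]) ω
              + 2 * α ^ 2 * (P[fun ω' => X (n + 1) ω' ^ 2 | ℱ (n + 1)]) ω) := by
        have iY : Integrable (Y (n + 1)) P := hYB.integrable hYm.aestronglyMeasurable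
        have iX : Integrable (X (n + 1)) P := hXB.integrable hXm.aestronglyMeasurable
        have e1 := condExp_add (μ := P) (m := ℱ (n + 1))
          ((integrable_const (1:ℝ)).add ((iY.smul β).sub (iX.smul α)))
          ((hY2_int.smul (2 * β ^ 2)).add (hX2_int.smul (2 * α ^ 2)))
        have e2 := condExp_add (μ := P) (m := ℱ (n + 1))
          (integrable_const (1:ℝ)) ((iY.smul β).sub (iX.smul α))
        have e3 := condExp_sub (μ := P) (m := ℱ (n + 1)) (iY.smul β) (iX.smul α)
        have e4 := condExp_smul (μ := P) (m := ℱ (n + 1)) β (Y (n + 1))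
        have e5 := condExp_smul (μ := P) (m := ℱ (n + 1)) α (X (n + 1))
        have e6 := condExp_add (μ := P) (m := ℱ (n + 1))
          (hY2_int.smul (2 * β ^ 2)) (hX2_int.smul (2 * α ^ 2))
        have e7 := condExp_smul (μ := P) (m := ℱ (n + 1)) (2 * β ^ 2)
          (fun ω => Y (n + 1) ω ^ 2)
        have e8 := condExp_smul (μ := P) (m := ℱ (n + 1)) (2 * α ^ 2)
          (fun ω => X (n + 1) ω ^ 2)
        have e9 := condExp_const (μ := P) hm (1:ℝ)
        filter_upwards [e1, e2, e3, e4, e5, e6, e7, e8] with ω f1 f2 f3 f4 f5 f6 f7 f8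
        simp only [Pi.add_apply, Pi.sub_apply, Pi.smul_apply, smul_eq_mul] at f1 f2 f3 f4 f5 f6 f7 f8
        rw [f1, f2, f3, f4, f5, f6, f7, f8, e9]
      -- second-moment bounds
      have hY2cond : P[(fun ω' => Y (n + 1) ω' ^ 2) | ℱ (n + 1)] ≤ᵐ[P]
          fun ω => B * EY ω := by
        have hmono : P[(fun ω' => Y (n + 1) ω' ^ 2) | ℱ (n + 1)] ≤ᵐ[P]
            P[(B • Y (n + 1)) | ℱ (n + 1)] := by
          refine condExp_mono hY2_int ((hYB.integrable hYm.aestronglyMeasurable).smul B) ?_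
          filter_upwards [hYb] with ω h
          simp only [Pi.smul_apply, smul_eq_mul]
          nlinarith [h.1, h.2]
        have hs := condExp_smul (μ := P) (m := ℱ (n + 1)) B (Y (n + 1))
        filter_upwards [hmono, hs] with ω h1 h2
        rw [h2] at h1
        simpa [hEY_def] using h1
      have hX2cond := hX2 (n + 1) hmem
      -- the core conditional bound  E[exp u | ℱ (n+1)] ≤ exp (-g)
      have hcore : P[(fun ω => Real.exp (u ω)) | ℱ (n + 1)] ≤ᵐ[P]
          fun ω => Real.exp (-g ω) := by
        have hmono1 := condExp_mono (μ := P) (m := ℱ (n + 1)) hexpu_int hr_int hquad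
        filter_upwards [hmono1, hlin, hY2cond, hX2cond, condExp_nonneg (μ := P) (m := ℱ (n + 1))
            (f := Y (n + 1)) (by filter_upwards [hYb] with ω h using h.1)] with ω f1 f2 f3 f4 _
        rw [f2] at f1
        have h5 : 2 * β ^ 2 * (P[fun ω' => Y (n + 1) ω' ^ 2 | ℱ (n + 1)]) ω
            ≤ 2 * β ^ 2 * (B * EY ω) := by nlinarith [sq_nonneg β]
        have h6 : 2 * α ^ 2 * (P[fun ω' => X (n + 1) ω' ^ 2 | ℱ (n + 1)]) ω
            ≤ 2 * α ^ 2 * (B * EX ω) := by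
          have : (P[fun ω' => X (n + 1) ω' ^ 2 | ℱ (n + 1)]) ω ≤ B * EX ω := f4
          nlinarith [sq_nonneg α]
        have h7 : (P[(fun ω => Real.exp (u ω)) | ℱ (n + 1)]) ω ≤ -g ω + 1 := by
          simp only [hg_def]
          nlinarith
        exact h7.trans (Real.add_one_le_exp _)
      -- putting everything together
      have hrw : ∀ ω : Ω, (∑ t ∈ Icc 1 (n + 1), (β * Y t ω - α * X t ω +
          ((α - 2 * α ^ 2 * B) * (P[X t | ℱ t]) ω
            - (β + 2 * β ^ 2 * B) * (P[Y t | ℱ t]) ω)))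
          = (S ω + g ω) + u ω := by
        intro ω
        rw [Finset.sum_Icc_succ_top (by omega : 1 ≤ n + 1)]
        simp only [hS_def, hu_def, hg_def, hEX_def, hEY_def]
        ring
      have hfun : (fun ω => Real.exp (S ω + g ω) * Real.exp (u ω))
          = (fun ω => Real.exp (S ω + g ω)) * (fun ω => Real.exp (u ω)) := rfl
      calc ∫ ω, Real.exp (∑ t ∈ Icc 1 (n + 1), (β * Y t ω - α * X t ω +
            ((α - 2 * α ^ 2 * B) * (P[X t | ℱ t]) ω
              - (β + 2 * β ^ 2 * B) * (P[Y t | ℱ t]) ω))) ∂P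
          = ∫ ω, Real.exp (S ω + g ω) * Real.exp (u ω) ∂P := by
            refine integral_congr_ae (Filter.Eventually.of_forall fun ω => ?_)
            dsimp only
            rw [hrw ω, Real.exp_add]
        _ = ∫ ω, (P[(fun ω => Real.exp (S ω + g ω) * Real.exp (u ω)) | ℱ (n + 1)]) ω ∂P :=
            (integral_condExp hm).symm
        _ ≤ ∫ ω, Real.exp (S ω) ∂P := by
            refine integral_mono_ae integrable_condExp hexpS_int ?_
            have hpull : P[((fun ω => Real.exp (S ω + g ω)) * (fun ω => Real.exp (u ω)))
                | ℱ (n + 1)] =ᵐ[P]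
                (fun ω => Real.exp (S ω + g ω)) * P[(fun ω => Real.exp (u ω)) | ℱ (n + 1)] := by
              refine condExp_mul_of_stronglyMeasurable_left hSgm ?_ hexpu_int
              rw [← hfun]; exact hprod_int
            rw [hfun]
            filter_upwards [hpull, hcore] with ω e1 e2
            simp only [Pi.mul_apply] at e1 ⊢
            rw [e1]
            have h8 : Real.exp (S ω + g ω) * (P[(fun ω => Real.exp (u ω)) | ℱ (n + 1)]) ω
                ≤ Real.exp (S ω + g ω) * Real.exp (-g ω) :=
              mul_le_mul_of_nonneg_left e2 (Real.exp_pos _).le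
            refine h8.trans (le_of_eq ?_)
            rw [← Real.exp_add]
            congr 1
            ring
        _ ≤ 1 := ih (fun t ht => hXmeas t (hsub t ht)) (fun t ht => hYmeas t (hsub t ht))
            (fun t ht => hXbdd t (hsub t ht)) (fun t ht => hYbdd t (hsub t ht))
            (fun t ht => hX2 t (hsub t ht))

private lemma prob_bound {Ω : Type*} {m0 : MeasurableSpace Ω} {P : Measure Ω}
    [IsProbabilityMeasure P] {S : Ω → ℝ} (hSm : Measurable S)
    (hint : Integrable (fun ω => Real.exp (S ω)) P)
    (hI : ∫ ω, Real.exp (S ω) ∂P ≤ 1) {δ : ℝ} (hδ0 : 0 < δ) (hδ1 : δ < 1) :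
    1 - δ ≤ (P {ω | S ω ≤ Real.log (1 / δ)}).toReal := by
  set bad : Set Ω := {ω | 1 / δ ≤ Real.exp (S ω)} with hbad_def
  have hmeas_bad : MeasurableSet bad := measurableSet_le measurable_const hSm.exp
  have h0 := mul_meas_ge_le_integral_of_nonneg
    (Filter.Eventually.of_forall fun ω => (Real.exp_pos (S ω)).le) hint (1 / δ)
  have hbadle : (P bad).toReal ≤ δ := by
    have h2 : (1 / δ) * (P bad).toReal ≤ 1 := h0.trans hI
    have h3 := mul_le_mul_of_nonneg_left h2 hδ0.le
    rw [← mul_assoc, mul_one_div, div_self hδ0.ne', one_mul, mul_one] at h3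
    exact h3
  have hsub : badᶜ ⊆ {ω | S ω ≤ Real.log (1 / δ)} := by
    intro ω hω
    simp only [hbad_def, Set.mem_compl_iff, Set.mem_setOf_eq, not_le] at hω
    exact (Real.le_log_iff_exp_le (by positivity)).2 hω.le
  have hcompl : (P badᶜ).toReal = 1 - (P bad).toReal := by
    rw [prob_compl_eq_one_sub hmeas_bad,
      ENNReal.toReal_sub_of_le prob_le_one ENNReal.one_ne_top, ENNReal.toReal_one]
  calc 1 - δ ≤ 1 - (P bad).toReal := by linarith
    _ = (P badᶜ).toReal := hcompl.symm
    _ ≤ (P {ω | S ω ≤ Real.log (1 / δ)}).toReal :=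
        ENNReal.toReal_mono (measure_ne_top _ _) (measure_mono hsub)

private lemma arith1 {B L sx sy sex sey : ℝ} (hB : 0 < B) (hL : 0 ≤ L)
    (hse : sey ≤ sex) (hsey : 0 ≤ sey)
    (h : (1/(34*B)) * sy - (2/(17*B)) * sx +
      ((2/(17*B) - 2*(2/(17*B))^2*B) * sex - (1/(34*B) + 2*(1/(34*B))^2*B) * sey) ≤ L) :
    (1/2) * sex ≤ sx - sy/4 + 9*B*L := by
  have hmul := mul_le_mul_of_nonneg_left h hB.le
  have heq : B * ((1/(34*B)) * sy - (2/(17*B)) * sx +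
      ((2/(17*B) - 2*(2/(17*B))^2*B) * sex - (1/(34*B) + 2*(1/(34*B))^2*B) * sey))
      = sy/34 - (2/17)*sx + ((26/289)*sex - (9/289)*sey) := by
    field_simp
    ring
  rw [heq] at hmul
  nlinarith [mul_nonneg hB.le hL]

private lemma arith2 {B L sx sy sex sey : ℝ} (hB : 0 < B) (hL : 0 ≤ L)
    (hse : sey ≤ sex) (hsey : 0 ≤ sey)
    (h : (1/(10*B)) * sy - (1/(5*B)) * sx +
      ((1/(5*B) - 2*(1/(5*B))^2*B) * sex - (1/(10*B) + 2*(1/(10*B))^2*B) * sey) ≤ L) :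
    (1/2) * sx ≤ sx - sy/4 + 9*B*L := by
  have hmul := mul_le_mul_of_nonneg_left h hB.le
  have heq : B * ((1/(10*B)) * sy - (1/(5*B)) * sx +
      ((1/(5*B) - 2*(1/(5*B))^2*B) * sex - (1/(10*B) + 2*(1/(10*B))^2*B) * sey))
      = sy/10 - (1/5)*sx + ((3/25)*sex - (3/25)*sey) := by
    field_simp
    ring
  rw [heq] at hmul
  nlinarith [mul_nonneg hB.le hL]

private lemma key2 {Ω : Type*} {m0 : MeasurableSpace Ω} (P : Measure Ω) [IsProbabilityMeasure P]
    (ℱ : Filtration ℕ m0) (T : ℕ) (X Y : ℕ → Ω → ℝ) (B : ℝ) (hB : 0 < B)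
    (α β : ℝ) (hα : 0 ≤ α) (hβ : 0 ≤ β) (hαβ : (α + β) * B ≤ 1)
    (hXmeas : ∀ t ∈ Icc 1 T, StronglyMeasurable[ℱ (t + 1)] (X t))
    (hYmeas : ∀ t ∈ Icc 1 T, StronglyMeasurable[ℱ (t + 1)] (Y t))
    (hXbdd : ∀ t ∈ Icc 1 T, ∀ᵐ ω ∂P, |X t ω| ≤ B)
    (hYbdd : ∀ t ∈ Icc 1 T, ∀ᵐ ω ∂P, Y t ω ∈ Set.Icc (0 : ℝ) B)
    (hX2 : ∀ t ∈ Icc 1 T, ∀ᵐ ω ∂P,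
      (P[fun ω' => (X t ω') ^ 2 | ℱ t]) ω ≤ B * (P[X t | ℱ t]) ω)
    {δ : ℝ} (hδ0 : 0 < δ) (hδ1 : δ < 1) :
    1 - δ ≤ (P {ω | ∑ t ∈ Icc 1 T, (β * Y t ω - α * X t ω +
      ((α - 2 * α ^ 2 * B) * (P[X t | ℱ t]) ω
        - (β + 2 * β ^ 2 * B) * (P[Y t | ℱ t]) ω)) ≤ Real.log (1 / δ)}).toReal := by
  have hI := key P ℱ X Y B hB α β hα hβ hαβ T hXmeas hYmeas hXbdd hYbdd hX2
  have hSm : Measurable[m0] (fun ω => ∑ t ∈ Icc 1 T, (β * Y t ω - α * X t ω +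
      ((α - 2 * α ^ 2 * B) * (P[X t | ℱ t]) ω
        - (β + 2 * β ^ 2 * B) * (P[Y t | ℱ t]) ω))) := by
    refine Finset.measurable_sum _ fun t ht => ?_
    have hx := ((hXmeas t ht).mono (ℱ.le _)).measurable
    have hy := ((hYmeas t ht).mono (ℱ.le _)).measurable
    have hex := ((stronglyMeasurable_condExp (μ := P) (f := X t) (m := ℱ t)).mono
      (ℱ.le t)).measurable
    have hey := ((stronglyMeasurable_condExp (μ := P) (f := Y t) (m := ℱ t)).mono
      (ℱ.le t)).measurable
    exact ((hy.const_mul β).sub (hx.const_mul α)).add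
      ((hex.const_mul _).sub (hey.const_mul _))
  have hSB : AEBdd P (fun ω => ∑ t ∈ Icc 1 T, (β * Y t ω - α * X t ω +
      ((α - 2 * α ^ 2 * B) * (P[X t | ℱ t]) ω
        - (β + 2 * β ^ 2 * B) * (P[Y t | ℱ t]) ω))) := by
    refine AEBdd.finsetSum fun t ht => ?_
    have hXt : AEBdd P (X t) := ⟨B, hXbdd t ht⟩
    have hYt : AEBdd P (Y t) := ⟨B, by
      filter_upwards [hYbdd t ht] with ω h
      rw [abs_le]; exact ⟨by linarith [h.1, hB.le], h.2⟩⟩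
    exact ((hYt.const_mul β).sub (hXt.const_mul α)).add
      ((hXt.condexp.const_mul _).sub (hYt.condexp.const_mul _))
  have hint : Integrable (fun ω => Real.exp (∑ t ∈ Icc 1 T, (β * Y t ω - α * X t ω +
      ((α - 2 * α ^ 2 * B) * (P[X t | ℱ t]) ω
        - (β + 2 * β ^ 2 * B) * (P[Y t | ℱ t]) ω)))) P :=
    hSB.exp.integrable hSm.exp.aestronglyMeasurable
  exact prob_bound hSm hint hI hδ0 hδ1

/-- Let `(Ω, 𝔉, P)` be a probability space with a filtration `ℱ`, and `(X_t, Y_t)_{t=1}^T`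
pairs of real random variables, `ℱ_{t+1}`-measurable, with `|X_t| ≤ B`, `0 ≤ Y_t ≤ B`
almost surely, `E[X_t | ℱ_t] ≥ E[Y_t | ℱ_t]`, and `B·E[X_t | ℱ_t] ≥ E[X_t² | ℱ_t]`. Then
for every `δ ∈ (0,1)`: (i) with probability at least `1 − δ`,
`(1/2) Σ_t E[X_t | ℱ_t] ≤ Σ_t (X_t − Y_t/4) + 9B log(1/δ)`; and (ii) with probability at
least `1 − δ`, `(1/2) Σ_t X_t ≤ Σ_t (X_t − Y_t/4) + 9B log(1/δ)`. -/
theorem useful_martingale_inequality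
    {Ω : Type*} {m0 : MeasurableSpace Ω} (P : Measure Ω) [IsProbabilityMeasure P]
    (ℱ : Filtration ℕ m0) (T : ℕ) (X Y : ℕ → Ω → ℝ) (B : ℝ) (hB : 0 < B)
    (hXmeas : ∀ t ∈ Icc 1 T, StronglyMeasurable[ℱ (t + 1)] (X t))
    (hYmeas : ∀ t ∈ Icc 1 T, StronglyMeasurable[ℱ (t + 1)] (Y t))
    (hXbdd : ∀ t ∈ Icc 1 T, ∀ᵐ ω ∂P, |X t ω| ≤ B)
    (hYbdd : ∀ t ∈ Icc 1 T, ∀ᵐ ω ∂P, Y t ω ∈ Set.Icc (0 : ℝ) B)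
    (hXY : ∀ t ∈ Icc 1 T, ∀ᵐ ω ∂P, (P[Y t | ℱ t]) ω ≤ (P[X t | ℱ t]) ω)
    (hX2 : ∀ t ∈ Icc 1 T, ∀ᵐ ω ∂P,
      (P[fun ω' => (X t ω') ^ 2 | ℱ t]) ω ≤ B * (P[X t | ℱ t]) ω)
    (δ : ℝ) (hδ0 : 0 < δ) (hδ1 : δ < 1) :
    ((1 : ℝ) - δ ≤
      (P {ω | (1 / 2) * ∑ t ∈ Icc 1 T, (P[X t | ℱ t]) ω ≤
          ∑ t ∈ Icc 1 T, (X t ω - Y t ω / 4) + 9 * B * Real.log (1 / δ)}).toReal) ∧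
    ((1 : ℝ) - δ ≤
      (P {ω | (1 / 2) * ∑ t ∈ Icc 1 T, X t ω ≤
          ∑ t ∈ Icc 1 T, (X t ω - Y t ω / 4) + 9 * B * Real.log (1 / δ)}).toReal) := by
  have hL : 0 ≤ Real.log (1 / δ) := by
    refine Real.log_nonneg ?_
    rw [le_div_iff₀ hδ0]; linarith
  have haeC : ∀ᵐ ω ∂P, ∀ t, t ∈ Icc 1 T →
      ((P[Y t | ℱ t]) ω ≤ (P[X t | ℱ t]) ω ∧ 0 ≤ (P[Y t | ℱ t]) ω) := by
    rw [ae_all_iff]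
    intro t
    by_cases ht : t ∈ Icc 1 T
    · have hY0 : 0 ≤ᵐ[P] Y t := by filter_upwards [hYbdd t ht] with ω h using h.1
      filter_upwards [hXY t ht, condExp_nonneg (m := ℱ t) hY0] with ω h1 h2
      exact fun _ => ⟨h1, h2⟩
    · filter_upwards with ω
      exact fun h => absurd h ht
  constructor
  · have hα : (0:ℝ) ≤ 2/(17*B) := by positivity
    have hβ : (0:ℝ) ≤ 1/(34*B) := by positivity
    have hαβ : (2/(17*B) + 1/(34*B)) * B ≤ 1 := by
      have h : (2/(17*B) + 1/(34*B)) * B = 5/34 := by field_simp; ring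
      rw [h]; norm_num
    have h1 := key2 P ℱ T X Y B hB (2/(17*B)) (1/(34*B)) hα hβ hαβ
      hXmeas hYmeas hXbdd hYbdd hX2 hδ0 hδ1
    refine le_trans h1 (ENNReal.toReal_mono (measure_ne_top _ _) (measure_mono_ae ?_))
    filter_upwards [haeC] with ω hc hω
    try simp only [Set.mem_setOf_eq] at hω ⊢
    simp only [Finset.sum_add_distrib, Finset.sum_sub_distrib, ← Finset.mul_sum] at hω
    simp only [Finset.sum_sub_distrib, ← Finset.sum_div]
    exact arith1 hB hL (Finset.sum_le_sum fun t ht => (hc t ht).1)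
      (Finset.sum_nonneg fun t ht => (hc t ht).2) hω
  · have hα : (0:ℝ) ≤ 1/(5*B) := by positivity
    have hβ : (0:ℝ) ≤ 1/(10*B) := by positivity
    have hαβ : (1/(5*B) + 1/(10*B)) * B ≤ 1 := by
      have h : (1/(5*B) + 1/(10*B)) * B = 3/10 := by field_simp; ring
      rw [h]; norm_num
    have h1 := key2 P ℱ T X Y B hB (1/(5*B)) (1/(10*B)) hα hβ hαβ
      hXmeas hYmeas hXbdd hYbdd hX2 hδ0 hδ1
    refine le_trans h1 (ENNReal.toReal_mono (measure_ne_top _ _) (measure_mono_ae ?_))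
    filter_upwards [haeC] with ω hc hω
    try simp only [Set.mem_setOf_eq] at hω ⊢
    simp only [Finset.sum_add_distrib, Finset.sum_sub_distrib, ← Finset.mul_sum] at hω
    simp only [Finset.sum_sub_distrib, ← Finset.sum_div]
    exact arith2 hB hL (Finset.sum_le_sum fun t ht => (hc t ht).1)
      (Finset.sum_nonneg fun t ht => (hc t ht).2) hω
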